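/- Let a ≥ 0, r ∈ ℕ₀, and fix x ∈ (0,∞). Then μ_{n,r}^a(x) = O(n^{−⌊(r+1)/2⌋}) as n → ∞; that is, there exist constants C > 0 and N ∈ ℕ such that |μ_{n,r}^a(x)| ≤ C·n^{−⌊(r+1)/2⌋} for all n ≥ N. -/

import Mathlib

open MeasureTheory Filter

noncomputable section

/-- Rising factorial `(n)_i = n(n+1)⋯(n+i-1)`, with `(n)_0 = 1`. -/
def risingFac (n : ℕ) : ℕ → ℝ
  | 0 => 1
  | i + 1 => risingFac n i * ((n : ℝ) + i)

/-- `P_k(n,a) = Σ_{i=0}^{k} C(k,i) (n)_i a^(k-i)`. -/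
def Pba (k n : ℕ) (a : ℝ) : ℝ :=
  ∑ i ∈ Finset.range (k + 1), (k.choose i : ℝ) * risingFac n i * a ^ (k - i)

/-- Generalized Baskakov basis function `W_{n,k}^a(x)`. -/
def Wgb (a : ℝ) (n k : ℕ) (x : ℝ) : ℝ :=
  Real.exp (-(a * x) / (1 + x)) * (Pba k n a / (Nat.factorial k : ℝ)) * x ^ k /
    (1 + x) ^ (n + k)

/-- Generalized Baskakov–Kantorovich operator `K_n^a(f;x)`. -/
def Kgb (a : ℝ) (n : ℕ) (f : ℝ → ℝ) (x : ℝ) : ℝ :=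
  ((n : ℝ) + 1) * ∑' k : ℕ,
    Wgb a n k x * ∫ t in ((k : ℝ) / ((n : ℝ) + 1))..(((k : ℝ) + 1) / ((n : ℝ) + 1)), f t


/-- `r`-th order central moment `μ_{n,r}^a(x)` of the generalized Baskakov operator. -/
def muMoment (a : ℝ) (n r : ℕ) (x : ℝ) : ℝ :=
  ∑' k : ℕ, Wgb a n k x * ((k : ℝ) / ((n : ℝ) + 1) - x) ^ r


open Finset Polynomial

section aux

lemma risingFac_zero (n : ℕ) : risingFac n 0 = 1 := rfl

lemma risingFac_succ (n i : ℕ) : risingFac n (i+1) = risingFac n i * ((n : ℝ) + i) := rfl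

lemma risingFac_nonneg (n i : ℕ) : 0 ≤ risingFac n i := by
  induction i with
  | zero => norm_num [risingFac]
  | succ i ih => rw [risingFac_succ]; positivity

lemma risingFac_shift (n i : ℕ) : risingFac n (i+1) = n * risingFac (n+1) i := by
  induction i with
  | zero => simp [risingFac]
  | succ i ih =>
      rw [risingFac_succ, ih, risingFac_succ]
      push_cast
      ring

lemma risingFac_zero_left (i : ℕ) (hi : i ≠ 0) : risingFac 0 i = 0 := by
  cases i with
  | zero => simp at hi
  | succ i => rw [risingFac_shift]; simp

lemma Pba_nonneg (k n : ℕ) {a : ℝ} (ha : 0 ≤ a) : 0 ≤ Pba k n a := by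
  apply Finset.sum_nonneg
  intro i _
  have := risingFac_nonneg n i
  positivity

lemma Pba_rec (k n : ℕ) (a : ℝ) :
    Pba (k+1) n a = a * Pba k n a + n * Pba k (n+1) a := by
  have hsplit : ∀ i, ((k+1).choose i : ℝ) * risingFac n i * a ^ (k+1-i)
      = (k.choose i : ℝ) * risingFac n i * a ^ (k+1-i)
        + (if i = 0 then 0 else (k.choose (i-1) : ℝ) * risingFac n i * a ^ (k+1-i)) := by
    intro i
    cases i with
    | zero => simp
    | succ i =>
        simp only [if_neg (Nat.succ_ne_zero i), Nat.add_sub_cancel]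
        rw [Nat.choose_succ_succ', Nat.cast_add]
        ring
  unfold Pba
  rw [Finset.sum_congr rfl (fun i _ => hsplit i), Finset.sum_add_distrib]
  congr 1
  · -- first part equals a * Pba k n a
    rw [Finset.sum_range_succ, Nat.choose_succ_self]
    simp only [Nat.cast_zero, zero_mul, mul_zero, zero_mul, add_zero]
    rw [Finset.mul_sum]
    apply Finset.sum_congr rfl
    intro i hi
    rw [Finset.mem_range] at hi
    have : k + 1 - i = (k - i) + 1 := by omega
    rw [this, pow_succ]
    ring
  · -- second part equals n * Pba k (n+1) a
    rw [Finset.sum_range_succ']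
    simp only [if_neg (Nat.succ_ne_zero _), if_pos rfl, add_zero, Nat.add_sub_cancel,
      if_true, zero_add]
    rw [Finset.mul_sum]
    apply Finset.sum_congr rfl
    intro i hi
    rw [risingFac_shift]
    have : k + 1 - (i+1) = k - i := by omega
    rw [this]
    ring

lemma hasSum_exp_div (z : ℝ) : HasSum (fun j => z ^ j / (Nat.factorial j : ℝ)) (Real.exp z) := by
  rw [Real.exp_eq_exp_ℝ]
  exact NormedSpace.expSeries_div_hasSum_exp z

lemma hasSum_mul_nat {f g : ℕ → ℝ} {A B : ℝ} (hf : HasSum f A) (hg : HasSum g B)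
    (hf' : Summable fun i => ‖f i‖) (hg' : Summable fun i => ‖g i‖) :
    HasSum (fun n => ∑ kl ∈ antidiagonal n, f kl.1 * g kl.2) (A * B) := by
  have hs := (summable_norm_sum_mul_antidiagonal_of_summable_norm hf' hg').of_norm
  have heq := tsum_mul_tsum_eq_tsum_sum_antidiagonal_of_summable_norm hf' hg'
  rw [hf.tsum_eq, hg.tsum_eq] at heq
  rw [heq]
  exact hs.hasSum

lemma risingFac_pascal (n i : ℕ) :
    risingFac (n+1) (i+1) = (i+1) * risingFac (n+1) i + risingFac n (i+1) := by
  rw [risingFac_succ, risingFac_shift]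
  push_cast; ring

lemma risingFac_div_fact (n i : ℕ) :
    risingFac (n+1) i / (Nat.factorial i : ℝ)
      = ∑ j ∈ range (i+1), risingFac n j / (Nat.factorial j : ℝ) := by
  induction i with
  | zero => simp [risingFac]
  | succ i ih =>
      rw [sum_range_succ, ← ih, risingFac_pascal]
      have h1 : (Nat.factorial (i+1) : ℝ) = (i+1) * Nat.factorial i := by
        push_cast [Nat.factorial_succ]; ring
      have h2 : (Nat.factorial i : ℝ) ≠ 0 := Nat.cast_ne_zero.2 (Nat.factorial_ne_zero i)
      have h3 : ((i:ℝ)+1) ≠ 0 := by positivity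
      rw [h1]
      field_simp

lemma hasSum_risingFac (m : ℕ) {t : ℝ} (ht0 : 0 ≤ t) (ht1 : t < 1) :
    HasSum (fun i => risingFac m i * t^i / (Nat.factorial i : ℝ)) ((1 - t)⁻¹ ^ m) := by
  induction m with
  | zero =>
      have : (fun i => risingFac 0 i * t^i / (Nat.factorial i : ℝ))
          = fun i => if i = 0 then 1 else 0 := by
        funext i
        cases i with
        | zero => simp [risingFac]
        | succ i => simp [risingFac_zero_left (i+1) (Nat.succ_ne_zero i)]
      rw [this, pow_zero]
      exact hasSum_ite_eq 0 1
  | succ m ih =>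
      have hgeo : HasSum (fun j : ℕ => t^j) (1 - t)⁻¹ :=
        hasSum_geometric_of_lt_one ht0 ht1
      have hfn : ∀ i, 0 ≤ risingFac m i * t^i / (Nat.factorial i : ℝ) := by
        intro i
        have := risingFac_nonneg m i
        positivity
      have hf' : Summable fun i => ‖risingFac m i * t^i / (Nat.factorial i : ℝ)‖ := by
        refine ih.summable.congr fun i => ?_
        rw [Real.norm_eq_abs, abs_of_nonneg (hfn i)]
      have hg' : Summable fun j : ℕ => ‖t^j‖ := by
        refine hgeo.summable.congr fun j => ?_
        rw [Real.norm_eq_abs, abs_of_nonneg (by positivity)]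
      have hmul := hasSum_mul_nat ih hgeo hf' hg'
      have hcongr : (fun n => ∑ kl ∈ antidiagonal n,
            (risingFac m kl.1 * t^kl.1 / (Nat.factorial kl.1 : ℝ)) * t^kl.2)
          = fun i => risingFac (m+1) i * t^i / (Nat.factorial i : ℝ) := by
        funext i
        rw [Nat.sum_antidiagonal_eq_sum_range_succ_mk]
        have : ∀ j ∈ range (i+1),
            (risingFac m j * t^j / (Nat.factorial j : ℝ)) * t^(i-j)
              = (risingFac m j / (Nat.factorial j : ℝ)) * t^i := by
          intro j hj
          rw [mem_range] at hj
          have : t^j * t^(i-j) = t^i := by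
            rw [← pow_add]; congr 1; omega
          rw [← this]; ring
        rw [sum_congr rfl this, ← sum_mul, ← risingFac_div_fact]
        ring
      rw [hcongr] at hmul
      rw [pow_succ]
      exact hmul

lemma hu {x : ℝ} (hx : 0 < x) : (0:ℝ) < 1 + x := by linarith

lemma ht0 {x : ℝ} (hx : 0 < x) : 0 < x / (1+x) := div_pos hx (hu hx)

lemma ht1 {x : ℝ} (hx : 0 < x) : x / (1+x) < 1 := by
  rw [div_lt_one (hu hx)]; linarith

lemma one_sub_t {x : ℝ} (hx : 0 < x) : 1 - x/(1+x) = (1+x)⁻¹ := by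
  field_simp
  ring

lemma Wgb_eq (n k : ℕ) (hx : 0 < x) :
    Wgb a n k x = Real.exp (-(a * (x/(1+x))))
      * ((1+x)⁻¹)^n * (Pba k n a * (x/(1+x))^k / (Nat.factorial k : ℝ)) := by
  have h1 : (0:ℝ) < 1 + x := hu hx
  unfold Wgb
  rw [pow_add, div_pow, inv_pow]
  have : -(a * x) / (1 + x) = -(a * (x/(1+x))) := by field_simp
  rw [this]
  field_simp

lemma Pba_conv (n k : ℕ) (hx : 0 < x) :
    Pba k n a * (x/(1+x))^k / (Nat.factorial k : ℝ)
      = ∑ kl ∈ antidiagonal k,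
          (risingFac n kl.1 * (x/(1+x))^kl.1 / (Nat.factorial kl.1 : ℝ))
            * ((a * (x/(1+x)))^kl.2 / (Nat.factorial kl.2 : ℝ)) := by
  set t := x/(1+x) with hdt
  rw [Nat.sum_antidiagonal_eq_sum_range_succ_mk]
  unfold Pba
  rw [sum_mul, sum_div]
  apply sum_congr rfl
  intro j hj
  rw [mem_range] at hj
  have hjk : j ≤ k := by omega
  have hfact : (k.choose j : ℝ) = (Nat.factorial k : ℝ) / ((Nat.factorial j : ℝ) * (Nat.factorial (k-j) : ℝ)) := by
    rw [eq_div_iff (by positivity)]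
    rw [← Nat.cast_mul, ← Nat.cast_mul]
    norm_cast
    rw [← mul_assoc]
    exact Nat.choose_mul_factorial_mul_factorial hjk
  have htk : t^k = t^j * t^(k-j) := by rw [← pow_add]; congr 1; omega
  rw [hfact, htk, mul_pow]
  have h1 : (Nat.factorial k : ℝ) ≠ 0 := Nat.cast_ne_zero.2 (Nat.factorial_ne_zero k)
  have h2 : (Nat.factorial j : ℝ) ≠ 0 := Nat.cast_ne_zero.2 (Nat.factorial_ne_zero j)
  have h3 : (Nat.factorial (k-j) : ℝ) ≠ 0 := Nat.cast_ne_zero.2 (Nat.factorial_ne_zero _)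
  field_simp

lemma hasSum_Wgb (n : ℕ) (ha : 0 ≤ a) (hx : 0 < x) :
    HasSum (fun k => Wgb a n k x) 1 := by
  set t := x/(1+x) with hdt
  have h0 : 0 < t := ht0 hx
  have h1 : t < 1 := ht1 hx
  have hF := hasSum_risingFac n h0.le h1
  have hG := hasSum_exp_div (a*t)
  have hf' : Summable fun i => ‖risingFac n i * t^i / (Nat.factorial i : ℝ)‖ := by
    refine hF.summable.congr fun i => ?_
    have := risingFac_nonneg n i
    rw [Real.norm_eq_abs, abs_of_nonneg (by positivity)]
  have hg' : Summable fun j => ‖(a*t)^j / (Nat.factorial j : ℝ)‖ := by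
    refine hG.summable.congr fun j => ?_
    have : 0 ≤ a * t := by positivity
    rw [Real.norm_eq_abs, abs_of_nonneg (by positivity)]
  have hmul := hasSum_mul_nat hF hG hf' hg'
  have hW : (fun k => Wgb a n k x) = fun k =>
      (Real.exp (-(a*t)) * ((1+x)⁻¹)^n) * ∑ kl ∈ antidiagonal k,
          (risingFac n kl.1 * t^kl.1 / (Nat.factorial kl.1 : ℝ))
            * ((a*t)^kl.2 / (Nat.factorial kl.2 : ℝ)) := by
    funext k
    rw [Wgb_eq n k hx, Pba_conv n k hx, mul_assoc]
  rw [hW]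
  have := hmul.mul_left (Real.exp (-(a*t)) * ((1+x)⁻¹)^n)
  suffices key : (1:ℝ) = Real.exp (-(a*t)) * ((1+x)⁻¹)^n * ((1 - t)⁻¹ ^ n * Real.exp (a * t)) by rwa [← key] at this
  rw [one_sub_t hx, inv_inv]
  rw [Real.exp_neg]
  have hne : Real.exp (a*t) ≠ 0 := (Real.exp_pos _).ne'
  have hne2 : ((1:ℝ)+x) ≠ 0 := (hu hx).ne'
  field_simp
  ring_nf
  simp [hne2]

lemma Wgb_nonneg (n k : ℕ) (ha : 0 ≤ a) (hx : 0 < x) : 0 ≤ Wgb a n k x := by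
  have h1 := hu hx
  have h2 := Pba_nonneg k n ha
  have e := Real.exp_pos (-(a * x) / (1 + x))
  unfold Wgb
  positivity

lemma Wgb_le (n : ℕ) (ha : 0 ≤ a) (hx : 0 < x) :
    ∃ ρ : ℝ, 0 < ρ ∧ ρ < 1 ∧ ∃ C : ℝ, 0 < C ∧
      ∀ k, Wgb a n k x ≤ C * (k+1) * ρ^k := by
  set t := x/(1+x) with hdt
  have h0 : 0 < t := ht0 hx
  have h1 : t < 1 := ht1 hx
  set τ : ℝ := (1+t)/2 with hdτ
  have hτ0 : 0 < τ := by positivity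
  have hτ1 : τ < 1 := by rw [hdτ]; linarith
  have htτ : t < τ := by rw [hdτ]; linarith
  set θ : ℝ := t/τ with hdθ
  have hθ0 : 0 < θ := div_pos h0 hτ0
  have hθ1 : θ < 1 := (div_lt_one hτ0).2 htτ
  set ρ : ℝ := max θ (1/2) with hdρ
  have hρ0 : 0 < ρ := lt_max_of_lt_left hθ0
  have hρ1 : ρ < 1 := max_lt hθ1 (by norm_num)
  refine ⟨ρ, hρ0, hρ1, ?_⟩
  set K : ℝ := (1-τ)⁻¹ ^ n with hdK
  have hK0 : 0 < K := by
    have : 0 < 1 - τ := by linarith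
    positivity
  set E : ℝ := Real.exp (2*(a*t)) with hdE
  have hE0 : 0 < E := Real.exp_pos _
  refine ⟨K * E, by positivity, ?_⟩
  intro k
  -- bound each b_j and c_j
  have hb : ∀ j, risingFac n j * t^j / (Nat.factorial j : ℝ) ≤ K * θ^j := by
    intro j
    have hrw : risingFac n j * t^j / (Nat.factorial j : ℝ)
        = (risingFac n j * τ^j / (Nat.factorial j : ℝ)) * θ^j := by
      have : t ^ j = τ^j * θ^j := by
        rw [← mul_pow, hdθ, mul_div_cancel₀ _ hτ0.ne']
      rw [this]; ring
    rw [hrw]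
    have hle : risingFac n j * τ^j / (Nat.factorial j : ℝ) ≤ K := by
      refine le_hasSum (hasSum_risingFac n hτ0.le hτ1) j fun i _ => ?_
      have := risingFac_nonneg n i
      positivity
    exact mul_le_mul_of_nonneg_right hle (by positivity)
  have hc : ∀ j, (a*t)^j / (Nat.factorial j : ℝ) ≤ E * (1/2)^j := by
    intro j
    have hat : 0 ≤ a * t := by positivity
    have hrw : (a*t)^j / (Nat.factorial j : ℝ)
        = ((2*(a*t))^j / (Nat.factorial j : ℝ)) * (1/2)^j := by
      rw [mul_pow, one_div, inv_pow]
      field_simp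
      ring
    rw [hrw]
    have hle : (2*(a*t))^j / (Nat.factorial j : ℝ) ≤ E := by
      refine le_hasSum (hasSum_exp_div (2*(a*t))) j fun i _ => ?_
      positivity
    exact mul_le_mul_of_nonneg_right hle (by positivity)
  -- combine
  rw [Wgb_eq n k hx, Pba_conv n k hx]
  have hc1 : Real.exp (-(a * t)) * ((1+x)⁻¹)^n ≤ 1 := by
    have e1 : Real.exp (-(a * t)) ≤ 1 := by
      rw [Real.exp_le_one_iff]
      have : 0 ≤ a * t := by positivity
      linarith
    have e2 : ((1+x)⁻¹ : ℝ)^n ≤ 1 := by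
      apply pow_le_one₀
      · positivity
      · rw [inv_le_one_iff₀]; right; linarith
    calc Real.exp (-(a * t)) * ((1+x)⁻¹)^n ≤ 1 * 1 := by
          apply mul_le_mul e1 e2 (by positivity) (by norm_num)
      _ = 1 := by norm_num
  have hsum_le : ∑ kl ∈ antidiagonal k,
        (risingFac n kl.1 * t^kl.1 / (Nat.factorial kl.1 : ℝ))
          * ((a*t)^kl.2 / (Nat.factorial kl.2 : ℝ))
      ≤ (K * E) * (k+1) * ρ^k := by
    have : ∀ kl ∈ antidiagonal k,
        (risingFac n kl.1 * t^kl.1 / (Nat.factorial kl.1 : ℝ))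
          * ((a*t)^kl.2 / (Nat.factorial kl.2 : ℝ)) ≤ (K * E) * ρ^k := by
      intro kl hkl
      rw [Finset.HasAntidiagonal.mem_antidiagonal] at hkl
      have e1 := hb kl.1
      have e2 := hc kl.2
      have hbn : 0 ≤ risingFac n kl.1 * t^kl.1 / (Nat.factorial kl.1 : ℝ) := by
        have := risingFac_nonneg n kl.1
        positivity
      have hcn : 0 ≤ (a*t)^kl.2 / (Nat.factorial kl.2 : ℝ) := by
        have : 0 ≤ a*t := by positivity
        positivity
      calc _ ≤ (K * θ^kl.1) * (E * (1/2)^kl.2) :=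
            mul_le_mul e1 e2 hcn (by positivity)
        _ ≤ (K * ρ^kl.1) * (E * ρ^kl.2) := by
            have p1 : θ^kl.1 ≤ ρ^kl.1 := pow_le_pow_left₀ hθ0.le (le_max_left _ _) _
            have p2 : (1/2:ℝ)^kl.2 ≤ ρ^kl.2 := pow_le_pow_left₀ (by norm_num) (le_max_right _ _) _
            apply mul_le_mul (by nlinarith [pow_nonneg hθ0.le kl.1, pow_nonneg hρ0.le kl.1])
              (by nlinarith [pow_nonneg hρ0.le kl.2, pow_nonneg (by norm_num : (0:ℝ) ≤ 1/2) kl.2])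
              (by positivity) (by positivity)
        _ = (K * E) * ρ^k := by rw [← hkl, pow_add]; ring
    calc _ ≤ ∑ _kl ∈ antidiagonal k, (K * E) * ρ^k := Finset.sum_le_sum this
      _ = (k+1) * ((K * E) * ρ^k) := by
          rw [Finset.sum_const, Nat.card_antidiagonal]
          push_cast; ring
      _ = (K * E) * (k+1) * ρ^k := by ring
  have hsum_nonneg : (0:ℝ) ≤ ∑ kl ∈ antidiagonal k,
        (risingFac n kl.1 * t^kl.1 / (Nat.factorial kl.1 : ℝ))
          * ((a*t)^kl.2 / (Nat.factorial kl.2 : ℝ)) := by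
    apply Finset.sum_nonneg
    intro kl _
    have := risingFac_nonneg n kl.1
    have : 0 ≤ a*t := by positivity
    have := risingFac_nonneg n kl.1
    positivity
  calc Real.exp (-(a * t)) * ((1+x)⁻¹)^n * (∑ kl ∈ antidiagonal k,
        (risingFac n kl.1 * t^kl.1 / (Nat.factorial kl.1 : ℝ))
          * ((a*t)^kl.2 / (Nat.factorial kl.2 : ℝ)))
      ≤ 1 * ((K*E) * (k+1) * ρ^k) := by
        apply mul_le_mul hc1 hsum_le hsum_nonneg (by norm_num)
    _ = (K*E) * (k+1) * ρ^k := by ring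

section wparams
variable {a x : ℝ}

lemma summable_Wgb_weight (n d : ℕ) {g : ℕ → ℝ} {D : ℝ}
    (hg : ∀ k, |g k| ≤ D * ((k:ℝ)+1)^d) (ha : 0 ≤ a) (hx : 0 < x) :
    Summable (fun k => Wgb a n k x * g k) := by
  obtain ⟨ρ, hρ0, hρ1, C, hC0, hW⟩ := Wgb_le n ha hx
  have hD : 0 ≤ D := by
    have := hg 0
    have h0 := abs_nonneg (g 0)
    simp at this
    linarith
  -- majorant
  have hmaj : Summable (fun k : ℕ => (C * D) * ((k:ℝ)+1)^(d+2) * ρ^k) := by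
    have h1 : Summable (fun k : ℕ => (k:ℝ)^(d+2) * ρ^k) := by
      have : ‖ρ‖ < 1 := by rw [Real.norm_eq_abs, abs_of_pos hρ0]; exact hρ1
      exact summable_pow_mul_geometric_of_norm_lt_one (d+2) this
    have h2 : Summable (fun k : ℕ => ((k:ℝ)+1)^(d+2) * ρ^(k+1)) := by
      have := (summable_nat_add_iff 1).2 h1
      refine this.congr fun k => ?_
      push_cast; ring_nf
    have h3 := h2.mul_left ((C*D) * ρ⁻¹)
    have h4 : (fun k : ℕ => (C * D) * ((k:ℝ)+1)^(d+2) * ρ^k)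
        = fun k : ℕ => ((C*D) * ρ⁻¹) * (((k:ℝ)+1)^(d+2) * ρ^(k+1)) := by
      funext k
      rw [pow_succ]
      field_simp
      ring
    exact Summable.congr h3 (fun k => (congrFun h4 k).symm)
  apply Summable.of_abs
  refine Summable.of_nonneg_of_le (fun k => abs_nonneg _) (fun k => ?_) hmaj
  have h1 : |Wgb a n k x * g k| = Wgb a n k x * |g k| := by
    rw [abs_mul, abs_of_nonneg (Wgb_nonneg n k ha hx)]
  rw [h1]
  calc Wgb a n k x * |g k| ≤ (C * ((k:ℝ)+1) * ρ^k) * (D * ((k:ℝ)+1)^d) := by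
        apply mul_le_mul (hW k) (hg k) (abs_nonneg _)
        positivity
    _ = (C*D*ρ^k) * (((k:ℝ)+1) * ((k:ℝ)+1)^d) := by ring
    _ ≤ (C*D*ρ^k) * (((k:ℝ)+1)^(d+2)) := by
        have hk1 : (0:ℝ) ≤ (k:ℝ)+1 := by positivity
        have hone : (1:ℝ) ≤ (k:ℝ)+1 := by
          have : (0:ℝ) ≤ (k:ℝ) := Nat.cast_nonneg k
          linarith
        have hstep : ((k:ℝ)+1) * ((k:ℝ)+1)^d ≤ ((k:ℝ)+1)^(d+2) := by
          rw [pow_succ, pow_succ]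
          calc ((k:ℝ)+1) * ((k:ℝ)+1)^d = (((k:ℝ)+1)^d * ((k:ℝ)+1)) * 1 := by ring
            _ ≤ (((k:ℝ)+1)^d * ((k:ℝ)+1)) * ((k:ℝ)+1) :=
                mul_le_mul_of_nonneg_left hone (by positivity)
        apply mul_le_mul_of_nonneg_left hstep (by positivity)
    _ = (C * D) * ((k:ℝ)+1)^(d+2) * ρ^k := by ring

lemma Wgb_step (ha : 0 ≤ a) (hx : 0 < x) (n k : ℕ) :
    ((k:ℝ)+1) * Wgb a n (k+1) x
      = a*(x/(1+x)) * Wgb a n k x + n * x * Wgb a (n+1) k x := by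
  have hu : (0:ℝ) < 1 + x := by linarith
  rw [Wgb_eq n (k+1) hx, Wgb_eq n k hx, Wgb_eq (n+1) k hx, Pba_rec]
  have hfact : (Nat.factorial (k+1) : ℝ) = ((k:ℝ)+1) * (Nat.factorial k : ℝ) := by
    push_cast [Nat.factorial_succ]; ring
  rw [hfact]
  have hk1 : ((k:ℝ)+1) ≠ 0 := by positivity
  have hkf : (Nat.factorial k : ℝ) ≠ 0 := Nat.cast_ne_zero.2 (Nat.factorial_ne_zero k)
  have hune : (1+x) ≠ 0 := hu.ne'
  rw [pow_succ, pow_succ]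
  field_simp

end wparams

/-- centered sums `S_r(n) = Σ_k W_{n,k}(x) (k - (at+nx))^r`. -/
def Sc (a x : ℝ) (r n : ℕ) : ℝ :=
  ∑' k : ℕ, Wgb a n k x * ((k:ℝ) - (a*(x/(1+x)) + n*x))^r


section scparams
variable {a x : ℝ}

lemma shift_weight_bound (c : ℝ) (r : ℕ) :
    ∀ k : ℕ, |((k:ℝ) + c)^r| ≤ (1+|c|)^r * ((k:ℝ)+1)^r := by
  intro k
  rw [abs_pow, ← mul_pow]
  apply pow_le_pow_left₀ (abs_nonneg _)
  have h1 : |(k:ℝ) + c| ≤ (k:ℝ) + 1 + |c| := by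
    calc |(k:ℝ) + c| ≤ |(k:ℝ)| + |c| := abs_add_le _ _
      _ = (k:ℝ) + |c| := by rw [abs_of_nonneg (Nat.cast_nonneg k)]
      _ ≤ (k:ℝ) + 1 + |c| := by linarith
  calc |(k:ℝ) + c| ≤ (k:ℝ) + 1 + |c| := h1
    _ ≤ (1+|c|) * ((k:ℝ)+1) := by
        have hk : (0:ℝ) ≤ (k:ℝ) := Nat.cast_nonneg k
        have hc : (0:ℝ) ≤ |c| := abs_nonneg c
        nlinarith

lemma summable_W_shift (ha : 0 ≤ a) (hx : 0 < x) (n r : ℕ) (c : ℝ) :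
    Summable (fun k : ℕ => Wgb a n k x * ((k:ℝ) + c)^r) :=
  summable_Wgb_weight n r (shift_weight_bound c r) ha hx

lemma summable_W_shift' (ha : 0 ≤ a) (hx : 0 < x) (n r : ℕ) (c : ℝ) :
    Summable (fun k : ℕ => (k:ℝ) * (Wgb a n k x * ((k:ℝ) + c)^r)) := by
  have hb : ∀ k : ℕ, |(k:ℝ) * ((k:ℝ) + c)^r| ≤ (1+|c|)^r * ((k:ℝ)+1)^(r+1) := by
    intro k
    rw [abs_mul]
    calc |(k:ℝ)| * |((k:ℝ) + c)^r| ≤ ((k:ℝ)+1) * ((1+|c|)^r * ((k:ℝ)+1)^r) := by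
          apply mul_le_mul
          · rw [abs_of_nonneg (Nat.cast_nonneg k)]; linarith
          · exact shift_weight_bound c r k
          · exact abs_nonneg _
          · positivity
      _ = (1+|c|)^r * ((k:ℝ)+1)^(r+1) := by rw [pow_succ]; ring
  have := summable_Wgb_weight n (r+1) hb ha hx
  refine this.congr fun k : ℕ => ?_
  ring

lemma Sc_rec (ha : 0 ≤ a) (hx : 0 < x) (r n : ℕ) :
    Sc a x (r+1) n
      = -(a*(x/(1+x)) + n*x) * Sc a x r n
        + a*(x/(1+x)) * ∑ j ∈ range (r+1), (r.choose j : ℝ) * Sc a x j n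
        + n * x * ∑ j ∈ range (r+1), (r.choose j : ℝ) * (1+x)^(r-j) * Sc a x j (n+1) := by
  set t := x/(1+x) with hdt
  set m : ℝ := a*t + n*x with hdm
  have hsum_shift : ∀ (n' r' : ℕ) (c : ℝ),
      Summable (fun k : ℕ => Wgb a n' k x * ((k:ℝ) + c)^r') :=
    fun n' r' c => summable_W_shift ha hx n' r' c
  -- pointwise rewriting to the + c form
  have hform : ∀ (n' : ℕ) (c : ℝ) (r' : ℕ),
      (fun k : ℕ => Wgb a n' k x * ((k:ℝ) - c)^r') = fun k : ℕ => Wgb a n' k x * ((k:ℝ) + (-c))^r' := by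
    intro n' c r'
    funext k
    rw [sub_eq_add_neg]
  have hS : ∀ (r' n' : ℕ), Summable (fun k : ℕ => Wgb a n' k x * ((k:ℝ) - m)^r') := by
    intro r' n'
    rw [hform]
    exact hsum_shift n' r' (-m)
  -- step 1
  have step1 : Sc a x (r+1) n
      = (∑' k : ℕ, (k:ℝ) * (Wgb a n k x * ((k:ℝ) - m)^r)) - m * Sc a x r n := by
    unfold Sc
    rw [← hdt, ← hdm]
    have h1 : Summable (fun k : ℕ => (k:ℝ) * (Wgb a n k x * ((k:ℝ) - m)^r)) :=
      (summable_W_shift' ha hx n r (-m)).congr (fun k => by rw [← sub_eq_add_neg])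
    have h2 : Summable (fun k : ℕ => m * (Wgb a n k x * ((k:ℝ) - m)^r)) := (hS r n).mul_left m
    have hpt : (fun k : ℕ => Wgb a n k x * ((k:ℝ) - m)^(r+1))
        = fun k : ℕ => (k:ℝ) * (Wgb a n k x * ((k:ℝ) - m)^r) - m * (Wgb a n k x * ((k:ℝ) - m)^r) := by
      funext k
      rw [pow_succ]
      ring
    rw [hpt, h1.tsum_sub h2, tsum_mul_left]
  -- step 2/3: shift the index
  have step2 : (∑' k : ℕ, (k:ℝ) * (Wgb a n k x * ((k:ℝ) - m)^r))
      = a*t * (∑' k : ℕ, Wgb a n k x * (((k:ℝ)+1) - m)^r)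
        + n*x * (∑' k : ℕ, Wgb a (n+1) k x * (((k:ℝ)+1) - m)^r) := by
    have hF : Summable (fun k : ℕ => (k:ℝ) * (Wgb a n k x * ((k:ℝ) - m)^r)) :=
      (summable_W_shift' ha hx n r (-m)).congr (fun k => by rw [← sub_eq_add_neg])
    rw [hF.tsum_eq_zero_add]
    simp only [Nat.cast_zero, zero_mul, zero_add]
    have hpt : ∀ k : ℕ, ((k+1:ℕ):ℝ) * (Wgb a n (k+1) x * (((k+1:ℕ):ℝ) - m)^r)
        = a*t * (Wgb a n k x * (((k:ℝ)+1) - m)^r)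
          + n*x * (Wgb a (n+1) k x * (((k:ℝ)+1) - m)^r) := by
      intro k
      push_cast
      have := Wgb_step ha hx n k
      rw [← hdt] at this
      calc ((k:ℝ)+1) * (Wgb a n (k+1) x * (((k:ℝ)+1) - m)^r)
          = (((k:ℝ)+1) * Wgb a n (k+1) x) * (((k:ℝ)+1) - m)^r := by ring
        _ = (a*t * Wgb a n k x + (n:ℝ) * x * Wgb a (n+1) k x) * (((k:ℝ)+1) - m)^r := by rw [this]
        _ = _ := by ring
    rw [tsum_congr hpt]
    have h1 : Summable (fun k : ℕ => a*t * (Wgb a n k x * (((k:ℝ)+1) - m)^r)) := by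
      apply Summable.mul_left
      have := hsum_shift n r (1-m)
      refine this.congr fun k : ℕ => ?_
      congr 2
      ring
    have h2 : Summable (fun k : ℕ => n*x * (Wgb a (n+1) k x * (((k:ℝ)+1) - m)^r)) := by
      apply Summable.mul_left
      have := hsum_shift (n+1) r (1-m)
      refine this.congr fun k : ℕ => ?_
      congr 2
      ring
    rw [h1.tsum_add h2, tsum_mul_left, tsum_mul_left]
  -- step 4a: binomial expansion around m
  have step4a : (∑' k : ℕ, Wgb a n k x * (((k:ℝ)+1) - m)^r)
      = ∑ j ∈ range (r+1), (r.choose j : ℝ) * Sc a x j n := by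
    have hpt : ∀ k : ℕ, Wgb a n k x * (((k:ℝ)+1) - m)^r
        = ∑ j ∈ range (r+1), (r.choose j : ℝ) * (Wgb a n k x * ((k:ℝ) - m)^j) := by
      intro k
      have hbin : (((k:ℝ) - m) + 1)^r
          = ∑ j ∈ range (r+1), ((k:ℝ) - m)^j * 1^(r-j) * (r.choose j : ℝ) := add_pow _ _ _
      have : ((k:ℝ)+1) - m = ((k:ℝ) - m) + 1 := by ring
      rw [this, hbin, Finset.mul_sum]
      apply sum_congr rfl
      intro j _
      rw [one_pow]
      ring
    rw [tsum_congr hpt, Summable.tsum_finsetSum]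
    · apply sum_congr rfl
      intro j _
      rw [tsum_mul_left]
      rfl
    · intro j _
      exact ((hS j n).mul_left _)
  -- step 4b: binomial expansion around m' = m + x
  have step4b : (∑' k : ℕ, Wgb a (n+1) k x * (((k:ℝ)+1) - m)^r)
      = ∑ j ∈ range (r+1), (r.choose j : ℝ) * (1+x)^(r-j) * Sc a x j (n+1) := by
    have hm' : a*t + ((n+1:ℕ):ℝ)*x = m + x := by push_cast; rw [hdm]; ring
    have hS' : ∀ (r' : ℕ), Summable (fun k : ℕ => Wgb a (n+1) k x * ((k:ℝ) - (m+x))^r') := by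
      intro r'
      have := hsum_shift (n+1) r' (-(m+x))
      refine this.congr fun k : ℕ => ?_
      rw [← sub_eq_add_neg]
    have hpt : ∀ k : ℕ, Wgb a (n+1) k x * (((k:ℝ)+1) - m)^r
        = ∑ j ∈ range (r+1), (r.choose j : ℝ) * (1+x)^(r-j)
            * (Wgb a (n+1) k x * ((k:ℝ) - (m+x))^j) := by
      intro k
      have hbin : (((k:ℝ) - (m+x)) + (1+x))^r
          = ∑ j ∈ range (r+1), ((k:ℝ) - (m+x))^j * (1+x)^(r-j) * (r.choose j : ℝ) := add_pow _ _ _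
      have : ((k:ℝ)+1) - m = ((k:ℝ) - (m+x)) + (1+x) := by ring
      rw [this, hbin, Finset.mul_sum]
      apply sum_congr rfl
      intro j _
      ring
    rw [tsum_congr hpt, Summable.tsum_finsetSum]
    · apply sum_congr rfl
      intro j _
      rw [tsum_mul_left]
      unfold Sc
      rw [← hdt, hm']
    · intro j _
      exact (hS' j).mul_left _
  rw [step1, step2, step4a, step4b]
  ring

lemma Sc_zero (ha : 0 ≤ a) (hx : 0 < x) (n : ℕ) : Sc a x 0 n = 1 := by
  unfold Sc
  simp only [pow_zero, mul_one]
  exact (hasSum_Wgb n ha hx).tsum_eq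

end scparams

lemma comp_sub_natDegree (p : ℝ[X]) :
    (p.comp (X + C 1) - p).natDegree ≤ p.natDegree - 1 := by
  by_cases hd : p.natDegree = 0
  · obtain ⟨c, rfl⟩ := Polynomial.natDegree_eq_zero.1 hd
    simp
  · set q : ℝ[X] := p.comp (X + C 1) with hq
    have hp0 : p ≠ 0 := fun h => hd (by simp [h])
    have hXC : (X + C (1:ℝ)).natDegree = 1 := natDegree_X_add_C 1
    have hqdeg : q.natDegree = p.natDegree := by
      rw [hq, natDegree_comp, hXC, mul_one]
    have hlc : q.leadingCoeff = p.leadingCoeff := by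
      rw [hq, leadingCoeff_comp (by rw [hXC]; norm_num), leadingCoeff_X_add_C, one_pow, mul_one]
    have hq0 : q ≠ 0 := by
      intro h
      apply hp0
      rw [← leadingCoeff_eq_zero, ← hlc, h, leadingCoeff_zero]
    by_cases hdiff : q - p = 0
    · rw [hdiff]; simp
    · have hdeg : q.degree = p.degree := by
        rw [degree_eq_natDegree hq0, degree_eq_natDegree hp0, hqdeg]
      have := degree_sub_lt hdeg hq0 hlc
      rw [hdeg] at this
      have hlt := natDegree_lt_natDegree hdiff this
      omega

lemma poly_eval_bound (p : ℝ[X]) (d : ℕ) (hd : p.natDegree ≤ d) :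
    ∃ K : ℝ, 0 < K ∧ ∀ n : ℕ, 1 ≤ n → |p.eval (n:ℝ)| ≤ K * (n:ℝ)^d := by
  refine ⟨(∑ i ∈ Finset.range (p.natDegree + 1), |p.coeff i|) + 1, by positivity, ?_⟩
  intro n hn
  have hn1 : (1:ℝ) ≤ (n:ℝ) := by exact_mod_cast hn
  have heval : p.eval (n:ℝ) = ∑ i ∈ Finset.range (p.natDegree + 1), p.coeff i * (n:ℝ)^i := by
    rw [eval_eq_sum_range]
  rw [heval]
  calc |∑ i ∈ Finset.range (p.natDegree + 1), p.coeff i * (n:ℝ)^i|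
      ≤ ∑ i ∈ Finset.range (p.natDegree + 1), |p.coeff i * (n:ℝ)^i| :=
        Finset.abs_sum_le_sum_abs _ _
    _ ≤ ∑ i ∈ Finset.range (p.natDegree + 1), |p.coeff i| * (n:ℝ)^d := by
        apply Finset.sum_le_sum
        intro i hi
        rw [Finset.mem_range] at hi
        rw [abs_mul, abs_pow, abs_of_nonneg (by positivity : (0:ℝ) ≤ (n:ℝ))]
        apply mul_le_mul_of_nonneg_left _ (abs_nonneg _)
        exact pow_le_pow_right₀ hn1 (by omega)
    _ = (∑ i ∈ Finset.range (p.natDegree + 1), |p.coeff i|) * (n:ℝ)^d := by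
        rw [Finset.sum_mul]
    _ ≤ ((∑ i ∈ Finset.range (p.natDegree + 1), |p.coeff i|) + 1) * (n:ℝ)^d := by
        apply mul_le_mul_of_nonneg_right _ (by positivity)
        linarith

section polyfam
variable {a x : ℝ}

lemma Sc_rec' (ha : 0 ≤ a) (hx : 0 < x) (r n : ℕ) :
    Sc a x (r+1) n
      = n*x*(Sc a x r (n+1) - Sc a x r n)
        + a*(x/(1+x)) * ∑ j ∈ range r, (r.choose j : ℝ) * Sc a x j n
        + n * x * ∑ j ∈ range r, (r.choose j : ℝ) * (1+x)^(r-j) * Sc a x j (n+1) := by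
  rw [Sc_rec ha hx, sum_range_succ, sum_range_succ, Nat.choose_self, Nat.sub_self]
  push_cast
  ring

lemma Sc_poly_family (ha : 0 ≤ a) (hx : 0 < x) (R : ℕ) :
    ∃ P : ℕ → ℝ[X], ∀ j, j ≤ R →
      (P j).natDegree ≤ j/2 ∧ ∀ n : ℕ, Sc a x j n = (P j).eval (n:ℝ) := by
  induction R with
  | zero =>
      refine ⟨fun _ => 1, ?_⟩
      intro j hj
      interval_cases j
      constructor
      · simp
      · intro n
        rw [Sc_zero ha hx]
        simp
  | succ R ih =>
      obtain ⟨P, hP⟩ := ih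
      set q : ℝ[X] :=
        (C x * X) * ((P R).comp (X + C 1) - P R)
          + C (a*(x/(1+x))) * (∑ j ∈ range R, C ((R.choose j : ℝ)) * P j)
          + (C x * X) * (∑ j ∈ range R,
              C ((R.choose j : ℝ) * (1+x)^(R-j)) * ((P j).comp (X + C 1))) with hdq
      refine ⟨Function.update P (R+1) q, ?_⟩
      intro j hj
      rcases Nat.lt_or_ge j (R+1) with hj' | hj'
      · rw [Function.update_of_ne (by omega)]
        exact hP j (by omega)
      · have hjeq : j = R + 1 := by omega
        subst hjeq
        rw [Function.update_self]
        constructor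
        · -- degree bound
          have bound1 : ((C x * X) * ((P R).comp (X + C 1) - P R)).natDegree ≤ (R+1)/2 := by
            by_cases hdr : (P R).natDegree = 0
            · obtain ⟨c, hc⟩ := Polynomial.natDegree_eq_zero.1 hdr
              rw [← hc]
              simp
            · have h1 := comp_sub_natDegree (P R)
              have h2 : (C x * X : ℝ[X]).natDegree ≤ 1 := by
                refine le_trans (natDegree_mul_le) ?_
                simp
              refine le_trans (natDegree_mul_le) ?_
              have h3 := (hP R (by omega)).1
              omega
          have bound2 : (C (a*(x/(1+x))) * (∑ j ∈ range R, C ((R.choose j : ℝ)) * P j)).natDegree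
              ≤ (R+1)/2 := by
            refine le_trans (natDegree_mul_le) ?_
            rw [natDegree_C, zero_add]
            apply natDegree_sum_le_of_forall_le
            intro i hi
            rw [mem_range] at hi
            refine le_trans (natDegree_mul_le) ?_
            rw [natDegree_C, zero_add]
            have := (hP i (by omega)).1
            omega
          have bound3 : ((C x * X) * (∑ j ∈ range R,
              C ((R.choose j : ℝ) * (1+x)^(R-j)) * ((P j).comp (X + C 1)))).natDegree
              ≤ (R+1)/2 := by
            rcases Nat.eq_zero_or_pos R with hR | hR
            · subst hR
              simp
            · refine le_trans (natDegree_mul_le) ?_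
              have h2 : (C x * X : ℝ[X]).natDegree ≤ 1 := by
                refine le_trans (natDegree_mul_le) ?_
                simp
              have h4 : (∑ j ∈ range R,
                  C ((R.choose j : ℝ) * (1+x)^(R-j)) * ((P j).comp (X + C 1))).natDegree
                  ≤ (R-1)/2 := by
                apply natDegree_sum_le_of_forall_le
                intro i hi
                rw [mem_range] at hi
                refine le_trans (natDegree_mul_le) ?_
                rw [natDegree_C, zero_add]
                have hcomp : ((P i).comp (X + C 1)).natDegree = (P i).natDegree := by
                  rw [natDegree_comp, natDegree_X_add_C, mul_one]
                rw [hcomp]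
                have := (hP i (by omega)).1
                omega
              omega
          rw [hdq]
          refine le_trans (natDegree_add_le _ _) ?_
          refine max_le (le_trans (natDegree_add_le _ _) (max_le bound1 bound2)) bound3
        · -- eval identity
          intro n
          have e1 : ((C x * X) * ((P R).comp (X + C 1) - P R)).eval (n:ℝ)
              = x * n * ((P R).eval ((n:ℝ)+1) - (P R).eval (n:ℝ)) := by
            simp [eval_comp]
          have e2 : (C (a*(x/(1+x))) * (∑ j ∈ range R, C ((R.choose j : ℝ)) * P j)).eval (n:ℝ)
              = (a*(x/(1+x))) * ∑ j ∈ range R, (R.choose j : ℝ) * (P j).eval (n:ℝ) := by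
            simp [eval_finset_sum]
          have e3 : ((C x * X) * (∑ j ∈ range R,
              C ((R.choose j : ℝ) * (1+x)^(R-j)) * ((P j).comp (X + C 1)))).eval (n:ℝ)
              = x * n * ∑ j ∈ range R,
                  ((R.choose j : ℝ) * (1+x)^(R-j)) * (P j).eval ((n:ℝ)+1) := by
            simp [eval_finset_sum, eval_comp]
          have hqe : q.eval (n:ℝ)
              = x * n * ((P R).eval ((n:ℝ)+1) - (P R).eval (n:ℝ))
                + (a*(x/(1+x))) * ∑ j ∈ range R, (R.choose j : ℝ) * (P j).eval (n:ℝ)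
                + x * n * ∑ j ∈ range R,
                  ((R.choose j : ℝ) * (1+x)^(R-j)) * (P j).eval ((n:ℝ)+1) := by
            rw [hdq, eval_add, eval_add, e1, e2, e3]
          rw [hqe, Sc_rec' ha hx R n]
          have hs1 : ∑ j ∈ range R, (R.choose j : ℝ) * Sc a x j n
              = ∑ j ∈ range R, (R.choose j : ℝ) * (P j).eval (n:ℝ) := by
            apply sum_congr rfl
            intro i hi
            rw [mem_range] at hi
            rw [(hP i (by omega)).2 n]
          have hs2 : ∑ j ∈ range R, (R.choose j : ℝ) * (1+x)^(R-j) * Sc a x j (n+1)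
              = ∑ j ∈ range R, ((R.choose j : ℝ) * (1+x)^(R-j)) * (P j).eval ((n:ℝ)+1) := by
            apply sum_congr rfl
            intro i hi
            rw [mem_range] at hi
            rw [(hP i (by omega)).2 (n+1)]
            push_cast
            ring
          have hr : Sc a x R (n+1) = (P R).eval ((n:ℝ)+1) := by
            rw [(hP R (by omega)).2 (n+1)]
            push_cast
            ring
          rw [hs1, hs2, hr, (hP R (by omega)).2 n]
          ring

lemma muMoment_eq (ha : 0 ≤ a) (hx : 0 < x) (r n : ℕ) :
    muMoment a n r x
      = (∑ j ∈ range (r+1), (r.choose j : ℝ) * (a*(x/(1+x)) - x)^(r-j) * Sc a x j n)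
          / ((n:ℝ)+1)^r := by
  set t := x/(1+x) with hdt
  set m : ℝ := a*t + n*x with hdm
  set c : ℝ := a*t - x with hdc
  have hn1 : ((n:ℝ)+1) ≠ 0 := by positivity
  have hpt : ∀ k : ℕ, Wgb a n k x * ((k : ℝ) / ((n : ℝ) + 1) - x) ^ r
      = ∑ j ∈ range (r+1),
          (((r.choose j : ℝ) * c^(r-j)) / ((n:ℝ)+1)^r) * (Wgb a n k x * ((k:ℝ) - m)^j) := by
    intro k
    have h1 : (k : ℝ) / ((n : ℝ) + 1) - x = (((k:ℝ) - m) + c) / ((n:ℝ)+1) := by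
      rw [hdm, hdc]
      field_simp
      ring
    rw [h1, div_pow, add_pow, Finset.sum_div, Finset.mul_sum]
    apply sum_congr rfl
    intro j _
    ring
  unfold muMoment
  rw [tsum_congr hpt, Summable.tsum_finsetSum]
  · rw [Finset.sum_div]
    apply sum_congr rfl
    intro j _
    rw [tsum_mul_left]
    have : Sc a x j n = ∑' k : ℕ, Wgb a n k x * ((k:ℝ) - m)^j := rfl
    rw [← this]
    ring
  · intro j _
    apply Summable.mul_left
    exact (summable_W_shift ha hx n j (-m)).congr (fun k => by rw [← sub_eq_add_neg])

end polyfam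

end aux

/-- `μ_{n,r}^a(x) = O(n^{−⌊(r+1)/2⌋})` as `n → ∞`
(here `(r+1)/2` is the natural-number floor `⌊(r+1)/2⌋`). -/
theorem statement14 (a : ℝ) (ha : 0 ≤ a) (r : ℕ) (x : ℝ) (hx : 0 < x) :
    ∃ C > (0 : ℝ), ∃ N : ℕ, ∀ n ≥ N,
      |muMoment a n r x| ≤ C / (n : ℝ) ^ ((r + 1) / 2) := by

  obtain ⟨P, hP⟩ := Sc_poly_family ha hx r
  -- bounds for each polynomial
  have hK : ∀ j, j ≤ r → ∃ K : ℝ, 0 < K ∧ ∀ n : ℕ, 1 ≤ n →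
      |(P j).eval (n:ℝ)| ≤ K * (n:ℝ)^(r/2) := by
    intro j hj
    apply poly_eval_bound
    exact le_trans (hP j hj).1 (Nat.div_le_div_right hj)
  choose K hK0 hKb using fun (j : Fin (r+1)) => hK j (by omega)
  set c : ℝ := a*(x/(1+x)) - x with hdc
  set A : ℝ := (∑ j ∈ range (r+1), (r.choose j : ℝ) * |c|^(r-j) *
      (if h : j < r+1 then K ⟨j, h⟩ else 1)) + 1 with hdA
  have hA0 : 0 < A := by
    rw [hdA]
    have : 0 ≤ ∑ j ∈ range (r+1), (r.choose j : ℝ) * |c|^(r-j) *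
        (if h : j < r+1 then K ⟨j, h⟩ else 1) := by
      apply Finset.sum_nonneg
      intro j hj
      rw [mem_range] at hj
      rw [dif_pos hj]
      have := (hK0 ⟨j, hj⟩).le
      positivity
    linarith
  refine ⟨A, hA0, 1, ?_⟩
  intro n hn
  have hn1 : (1:ℝ) ≤ (n:ℝ) := by exact_mod_cast hn
  have hn0 : (0:ℝ) < (n:ℝ) := by linarith
  rw [muMoment_eq ha hx r n]
  rw [abs_div]
  have hden : |((n:ℝ)+1)^r| = ((n:ℝ)+1)^r := abs_of_pos (by positivity)
  rw [hden]
  -- numerator bound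
  have hnum : |∑ j ∈ range (r+1), (r.choose j : ℝ) * c^(r-j) * Sc a x j n|
      ≤ A * (n:ℝ)^(r/2) := by
    calc |∑ j ∈ range (r+1), (r.choose j : ℝ) * c^(r-j) * Sc a x j n|
        ≤ ∑ j ∈ range (r+1), |(r.choose j : ℝ) * c^(r-j) * Sc a x j n| :=
          Finset.abs_sum_le_sum_abs _ _
      _ ≤ ∑ j ∈ range (r+1), (r.choose j : ℝ) * |c|^(r-j) *
            (if h : j < r+1 then K ⟨j, h⟩ else 1) * (n:ℝ)^(r/2) := by
          apply Finset.sum_le_sum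
          intro j hj
          rw [mem_range] at hj
          rw [dif_pos hj]
          rw [abs_mul, abs_mul, abs_pow]
          have h1 : |(r.choose j : ℝ)| = (r.choose j : ℝ) := abs_of_nonneg (by positivity)
          rw [h1]
          have h2 : |Sc a x j n| ≤ K ⟨j, hj⟩ * (n:ℝ)^(r/2) := by
            rw [(hP j (by omega)).2 n]
            exact hKb ⟨j, hj⟩ n hn
          calc (r.choose j : ℝ) * |c|^(r-j) * |Sc a x j n|
              ≤ (r.choose j : ℝ) * |c|^(r-j) * (K ⟨j, hj⟩ * (n:ℝ)^(r/2)) := by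
                apply mul_le_mul_of_nonneg_left h2 (by positivity)
            _ = (r.choose j : ℝ) * |c|^(r-j) * K ⟨j, hj⟩ * (n:ℝ)^(r/2) := by ring
      _ = (∑ j ∈ range (r+1), (r.choose j : ℝ) * |c|^(r-j) *
            (if h : j < r+1 then K ⟨j, h⟩ else 1)) * (n:ℝ)^(r/2) := by
          rw [Finset.sum_mul]
      _ ≤ A * (n:ℝ)^(r/2) := by
          apply mul_le_mul_of_nonneg_right _ (by positivity)
          rw [hdA]
          linarith
  calc |∑ j ∈ range (r+1), (r.choose j : ℝ) * c^(r-j) * Sc a x j n| / ((n:ℝ)+1)^r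
      ≤ (A * (n:ℝ)^(r/2)) / (n:ℝ)^r := by
        apply div_le_div₀ (by positivity) hnum (by positivity)
        exact pow_le_pow_left₀ hn0.le (by linarith) r
    _ = A / (n:ℝ)^((r+1)/2) := by
        have hpow : (n:ℝ)^r = (n:ℝ)^(r/2) * (n:ℝ)^((r+1)/2) := by
          rw [← pow_add]
          congr 1
          omega
        rw [hpow]
        have h1 : (n:ℝ)^(r/2) ≠ 0 := by positivity
        have h2 : (n:ℝ)^((r+1)/2) ≠ 0 := by positivity
        field_simp
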